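/- Let v(q) = max_{a∈A} Σ_ω q(ω)u_R(ω,a) and suppose a distribution over posteriors {p_σ} has mean μ and E_σ[v(p_σ)] = v(μ). If an action a* attains the maximum at μ, then a* attains the maximum v(p_σ) at every posterior p_σ in the support of the distribution. -/

import Mathlib

/-- Let `v(q) = max_a Σ_ω q(ω)·u_R(ω,a)` and let a split of the prior `μ` into posteriors
`p i` (with weights `w i`) satisfy `E[v(p_σ)] = v(μ)`. If an action `astar` attains the
maximum at `μ`, then `astar` attains the maximum at every posterior in the support. -/
theorem stmt14 {Ω A : Type*} [Fintype Ω] [Fintype A] [Nonempty A] {ι : Type*} [Fintype ι]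
    (uR : Ω → A → ℝ)
    (p : ι → (Ω → ℝ)) (hp : ∀ i, p i ∈ stdSimplex ℝ Ω)
    (w : ι → ℝ) (hw0 : ∀ i, 0 ≤ w i) (hw1 : ∑ i, w i = 1)
    (μ : Ω → ℝ) (hμ : ∀ ω, μ ω = ∑ i, w i * p i ω)
    (hval : ∑ i, w i * (⨆ a : A, ∑ ω, p i ω * uR ω a) = ⨆ a : A, ∑ ω, μ ω * uR ω a)
    (astar : A) (hastar : ∀ a, ∑ ω, μ ω * uR ω a ≤ ∑ ω, μ ω * uR ω astar) :
    ∀ i, 0 < w i → ∀ a, ∑ ω, p i ω * uR ω a ≤ ∑ ω, p i ω * uR ω astar := by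
  set v : ι → ℝ := fun i => ⨆ a : A, ∑ ω, p i ω * uR ω a with hv
  have hbdd : ∀ i, BddAbove (Set.range fun a : A => ∑ ω, p i ω * uR ω a) :=
    fun i => Set.Finite.bddAbove (Set.finite_range _)
  have hle : ∀ i, ∑ ω, p i ω * uR ω astar ≤ v i := fun i => le_ciSup (hbdd i) astar
  -- v(μ) = value of astar at μ
  have hsupμ : (⨆ a : A, ∑ ω, μ ω * uR ω a) = ∑ ω, μ ω * uR ω astar :=
    le_antisymm (ciSup_le hastar) (le_ciSup (f := fun a : A => ∑ ω, μ ω * uR ω a) (Set.Finite.bddAbove (Set.finite_range _)) astar)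
  -- expand μ value of astar
  have hexp : ∑ ω, μ ω * uR ω astar = ∑ i, w i * ∑ ω, p i ω * uR ω astar := by
    simp only [hμ, Finset.sum_mul, Finset.mul_sum]
    rw [Finset.sum_comm]
    congr 1; ext i; congr 1; ext ω; ring
  have hsum : ∑ i, w i * v i = ∑ i, w i * ∑ ω, p i ω * uR ω astar := by
    rw [hval, hsupμ, hexp]
  have heq : ∀ i ∈ Finset.univ, w i * ∑ ω, p i ω * uR ω astar = w i * v i := by
    rw [← Finset.sum_eq_sum_iff_of_le
      (fun i _ => mul_le_mul_of_nonneg_left (hle i) (hw0 i))]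
    exact hsum.symm
  intro i hwi a
  have := heq i (Finset.mem_univ i)
  have hvi : v i = ∑ ω, p i ω * uR ω astar := by
    exact (mul_left_cancel₀ (ne_of_gt hwi) this).symm
  calc ∑ ω, p i ω * uR ω a ≤ v i := le_ciSup (hbdd i) a
    _ = _ := hvi
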